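/- The space H^∞_v(G) is a Banach space if and only if for each z ∈ G the evaluation functional δ_z is bounded on H^∞_v(G) and sup_{z∈K} ‖δ_z‖'_v < ∞ for every compact subset K of G. -/

import Mathlib

open Complex Metric Set Filter Topology MeasureTheory
open Bornology

noncomputable section

/-- `f` is holomorphic on `G` and `sup_{z in G} v z * |f z| < ∞`. -/
def MemHv (G : Set ℂ) (v : ℂ → ℝ) (f : ℂ → ℂ) : Prop :=
  DifferentiableOn ℂ f G ∧ ∃ C : ℝ, ∀ z ∈ G, v z * ‖f z‖ ≤ C

/-- The weighted sup-seminorm `‖f‖_v`. -/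
def HvNorm (G : Set ℂ) (v : ℂ → ℝ) (f : ℂ → ℂ) : ℝ :=
  sSup ((fun z => v z * ‖f z‖) '' G)

/-- A `‖·‖_v`-Cauchy sequence. -/
def HvCauchy (G : Set ℂ) (v : ℂ → ℝ) (F : ℕ → ℂ → ℂ) : Prop :=
  ∀ ε : ℝ, 0 < ε → ∃ N : ℕ, ∀ m ≥ N, ∀ n ≥ N, ∀ z ∈ G,
    v z * ‖F m z - F n z‖ ≤ ε

/-- Convergence in the `‖·‖_v`-seminorm. -/
def HvTendsto (G : Set ℂ) (v : ℂ → ℝ) (F : ℕ → ℂ → ℂ) (f : ℂ → ℂ) : Prop :=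
  ∀ ε : ℝ, 0 < ε → ∃ N : ℕ, ∀ n ≥ N, ∀ z ∈ G,
    v z * ‖F n z - f z‖ ≤ ε

/-- Completeness of `H^∞_v(G)`: every Cauchy sequence converges in the space. -/
def HvComplete (G : Set ℂ) (v : ℂ → ℝ) : Prop :=
  ∀ F : ℕ → ℂ → ℂ, (∀ n, MemHv G v (F n)) → HvCauchy G v F →
    ∃ f : ℂ → ℂ, MemHv G v f ∧ HvTendsto G v F f

/-- The seminorm `‖·‖_v` is a norm: `‖f‖_v = 0` forces `f = 0` on `G`. -/
def HvNormed (G : Set ℂ) (v : ℂ → ℝ) : Prop :=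
  ∀ f : ℂ → ℂ, MemHv G v f → (∀ z ∈ G, v z * ‖f z‖ = 0) →
    ∀ z ∈ G, f z = 0

/-- `H^∞_v(G)` is a Banach space. -/
def IsBanachHv (G : Set ℂ) (v : ℂ → ℝ) : Prop :=
  HvNormed G v ∧ HvComplete G v

lemma le_hvNorm {G : Set ℂ} {v : ℂ → ℝ} {f : ℂ → ℂ} (hf : MemHv G v f) {z : ℂ}
    (hz : z ∈ G) : v z * ‖f z‖ ≤ HvNorm G v f := by
  obtain ⟨C, hC⟩ := hf.2
  exact le_csSup ⟨C, by rintro x ⟨w, hw, rfl⟩; exact hC w hw⟩ ⟨z, hz, rfl⟩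

lemma hvNorm_le {G : Set ℂ} {v : ℂ → ℝ} {f : ℂ → ℂ} (hne : G.Nonempty) {C : ℝ}
    (hC : ∀ z ∈ G, v z * ‖f z‖ ≤ C) : HvNorm G v f ≤ C :=
  csSup_le (hne.image _) (by rintro x ⟨w, hw, rfl⟩; exact hC w hw)

lemma hvNorm_nonneg {G : Set ℂ} {v : ℂ → ℝ} {f : ℂ → ℂ} (hv : ∀ z ∈ G, 0 ≤ v z)
    (hne : G.Nonempty) (hf : MemHv G v f) : 0 ≤ HvNorm G v f := by
  obtain ⟨z, hz⟩ := hne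
  exact le_trans (mul_nonneg (hv z hz) (norm_nonneg _)) (le_hvNorm hf hz)

lemma memHv_sub {G : Set ℂ} {v : ℂ → ℝ} (hv : ∀ z ∈ G, 0 ≤ v z) {f g : ℂ → ℂ}
    (hf : MemHv G v f) (hg : MemHv G v g) : MemHv G v (fun z => f z - g z) := by
  obtain ⟨Cf, hCf⟩ := hf.2
  obtain ⟨Cg, hCg⟩ := hg.2
  refine ⟨hf.1.sub hg.1, Cf + Cg, fun z hz => ?_⟩
  calc v z * ‖f z - g z‖ ≤ v z * (‖f z‖ + ‖g z‖) := by
        have : ‖f z - g z‖ ≤ ‖f z‖ + ‖g z‖ := by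
          simpa using norm_sub_le (f z) (g z)
        exact mul_le_mul_of_nonneg_left this (hv z hz)
    _ = v z * ‖f z‖ + v z * ‖g z‖ := by ring
    _ ≤ Cf + Cg := add_le_add (hCf z hz) (hCg z hz)

lemma memHv_const_mul {G : Set ℂ} {v : ℂ → ℝ} {f : ℂ → ℂ} (hf : MemHv G v f) (c : ℂ) :
    MemHv G v (fun z => c * f z) := by
  obtain ⟨Cf, hCf⟩ := hf.2
  refine ⟨(hf.1.const_mul c : _), ‖c‖ * Cf, fun z hz => ?_⟩
  have : v z * ‖c * f z‖ = ‖c‖ * (v z * ‖f z‖) := by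
    rw [norm_mul]; ring
  rw [this]
  exact mul_le_mul_of_nonneg_left (hCf z hz) (norm_nonneg c)

lemma hvIdentity {G : Set ℂ} {v : ℂ → ℝ} (hG : IsOpen G) (hGc : IsPreconnected G) {z₀ : ℂ}
    (hz₀ : z₀ ∈ G) (hacc : ∃ᶠ z in 𝓝[≠] z₀, z ∈ G ∧ 0 < v z) {f : ℂ → ℂ}
    (hf : DifferentiableOn ℂ f G) (h0 : ∀ w ∈ G, 0 < v w → f w = 0) : ∀ z ∈ G, f z = 0 := by
  have an : AnalyticOnNhd ℂ f G := hf.analyticOnNhd hG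
  have freq : ∃ᶠ z in 𝓝[≠] z₀, f z = 0 :=
    hacc.mono (fun z hz => h0 z hz.1 hz.2)
  have := an.eqOn_zero_of_preconnected_of_frequently_eq_zero hGc hz₀ freq
  exact fun z hz => this hz

set_option maxHeartbeats 2000000 in
lemma backwardDir {G : Set ℂ} {v : ℂ → ℝ} (hG : IsOpen G) (hGc : IsConnected G)
    (hv : ∀ z ∈ G, 0 ≤ v z)
    (hK : ∀ K ⊆ G, IsCompact K → ∃ C : ℝ, ∀ z ∈ K, ∀ f : ℂ → ℂ, MemHv G v f →
          ‖f z‖ ≤ C * HvNorm G v f) :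
    HvComplete G v := by
  intro F hFmem hFc
  have hne : G.Nonempty := hGc.nonempty
  -- uniform bound on compacts for differences
  have key : ∀ K ⊆ G, IsCompact K → ∃ C : ℝ, 0 ≤ C ∧ ∀ ε > 0, ∀ N : ℕ,
      (∀ m ≥ N, ∀ n ≥ N, ∀ z ∈ G, v z * ‖F m z - F n z‖ ≤ ε) →
      ∀ m ≥ N, ∀ n ≥ N, ∀ z ∈ K, ‖F m z - F n z‖ ≤ C * ε := by
    intro K hKsub hKcomp
    obtain ⟨C, hC⟩ := hK K hKsub hKcomp
    refine ⟨|C|, abs_nonneg _, fun ε hε N hN m hm n hn z hz => ?_⟩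
    have hmem : MemHv G v (fun w => F m w - F n w) := memHv_sub hv (hFmem m) (hFmem n)
    have h1 : ‖F m z - F n z‖ ≤ C * HvNorm G v (fun w => F m w - F n w) :=
      hC z hz _ hmem
    have h2 : HvNorm G v (fun w => F m w - F n w) ≤ ε :=
      hvNorm_le hne (fun w hw => hN m hm n hn w hw)
    have h3 : 0 ≤ HvNorm G v (fun w => F m w - F n w) := hvNorm_nonneg hv hne hmem
    calc ‖F m z - F n z‖ ≤ C * HvNorm G v (fun w => F m w - F n w) := h1
      _ ≤ |C| * HvNorm G v (fun w => F m w - F n w) :=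
          mul_le_mul_of_nonneg_right (le_abs_self C) h3
      _ ≤ |C| * ε := mul_le_mul_of_nonneg_left h2 (abs_nonneg C)
  -- pointwise limit
  have hcs : ∀ z ∈ G, CauchySeq (fun n => F n z) := by
    intro z hz
    obtain ⟨C, hC0, hC⟩ := key {z} (singleton_subset_iff.2 hz) isCompact_singleton
    rw [Metric.cauchySeq_iff]
    intro ε hε
    have hε' : 0 < ε / (C + 1) := div_pos hε (by linarith)
    obtain ⟨N, hN⟩ := hFc _ hε'
    refine ⟨N, fun m hm n hn => ?_⟩
    have := hC _ hε' N hN m hm n hn z rfl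
    rw [Complex.dist_eq]
    calc ‖F m z - F n z‖ ≤ C * (ε / (C + 1)) := this
      _ < ε := by
          have h1 : C / (C + 1) < 1 := (div_lt_one (by linarith)).2 (by linarith)
          calc C * (ε / (C + 1)) = C / (C + 1) * ε := by ring
            _ < 1 * ε := mul_lt_mul_of_pos_right h1 hε
            _ = ε := one_mul ε
  set f0 : ℂ → ℂ := fun z => limUnder atTop (fun n => F n z) with hf0
  have htends : ∀ z ∈ G, Tendsto (fun n => F n z) atTop (𝓝 (f0 z)) := by
    intro z hz
    exact (hcs z hz).tendsto_limUnder
  -- HvTendsto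
  have htv : HvTendsto G v F f0 := by
    intro ε hε
    obtain ⟨N, hN⟩ := hFc ε hε
    refine ⟨N, fun n hn z hz => ?_⟩
    have t1 : Tendsto (fun m => F n z - F m z) atTop (𝓝 (F n z - f0 z)) :=
      tendsto_const_nhds.sub (htends z hz)
    have t2 : Tendsto (fun m => v z * ‖F n z - F m z‖) atTop
        (𝓝 (v z * ‖F n z - f0 z‖)) :=
      (continuous_norm.tendsto _).comp t1 |>.const_mul (v z)
    refine le_of_tendsto t2 ?_
    filter_upwards [eventually_ge_atTop N] with m hm
    exact hN n hn m hm z hz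
  -- local uniform convergence
  have hlu : TendstoLocallyUniformlyOn F f0 atTop G := by
    rw [tendstoLocallyUniformlyOn_iff_forall_isCompact hG]
    intro K hKsub hKcomp
    obtain ⟨C, hC0, hC⟩ := key K hKsub hKcomp
    rw [Metric.tendstoUniformlyOn_iff]
    intro ε hε
    have hε' : 0 < ε / (2 * (C + 1)) := div_pos hε (by linarith)
    obtain ⟨N, hN⟩ := hFc _ hε'
    filter_upwards [eventually_ge_atTop N] with n hn x hx
    have t1 : Tendsto (fun m => ‖F n x - F m x‖) atTop
        (𝓝 (‖F n x - f0 x‖)) :=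
      (continuous_norm.tendsto _).comp (tendsto_const_nhds.sub (htends x (hKsub hx)))
    have hle : ‖F n x - f0 x‖ ≤ C * (ε / (2 * (C + 1))) := by
      refine le_of_tendsto t1 ?_
      filter_upwards [eventually_ge_atTop N] with m hm
      exact hC _ hε' N hN n hn m hm x hx
    rw [Complex.dist_eq]
    have : ‖f0 x - F n x‖ = ‖F n x - f0 x‖ := by
      rw [← norm_neg]; ring_nf
    rw [this]
    calc ‖F n x - f0 x‖ ≤ C * (ε / (2 * (C + 1))) := hle
      _ < ε := by
          have h1 : C / (2 * (C + 1)) < 1 := (div_lt_one (by linarith)).2 (by linarith)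
          calc C * (ε / (2 * (C + 1))) = C / (2 * (C + 1)) * ε := by ring
            _ < 1 * ε := mul_lt_mul_of_pos_right h1 hε
            _ = ε := one_mul ε
  have hdiff : DifferentiableOn ℂ f0 G :=
    hlu.differentiableOn (Eventually.of_forall fun n => (hFmem n).1) hG
  obtain ⟨N₁, hN₁⟩ := htv 1 one_pos
  obtain ⟨CN, hCN⟩ := (hFmem N₁).2
  refine ⟨f0, ⟨hdiff, CN + 1, fun z hz => ?_⟩, htv⟩
  have h1 : v z * ‖F N₁ z - f0 z‖ ≤ 1 := hN₁ N₁ le_rfl z hz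
  have h2 : ‖f0 z‖ ≤ ‖F N₁ z‖ + ‖F N₁ z - f0 z‖ := by
    have := norm_sub_le (F N₁ z) (F N₁ z - f0 z)
    simpa using this
  calc v z * ‖f0 z‖
      ≤ v z * (‖F N₁ z‖ + ‖F N₁ z - f0 z‖) :=
        mul_le_mul_of_nonneg_left h2 (hv z hz)
    _ = v z * ‖F N₁ z‖ + v z * ‖F N₁ z - f0 z‖ := by ring
    _ ≤ CN + 1 := add_le_add (hCN z hz) h1
open Bornology in
lemma isPreconnected_thickening' {T : Set ℂ} (hT : IsPreconnected T) (hne : T.Nonempty)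
    {δ : ℝ} (hδ : 0 < δ) : IsPreconnected (thickening δ T) := by
  obtain ⟨x₀, hx₀⟩ := hne
  have he : thickening δ T = ⋃₀ ((fun x => ball x δ ∪ T) '' T) := by
    ext w
    simp only [mem_sUnion, mem_image]
    constructor
    · intro hw
      obtain ⟨x, hx, hd⟩ := Metric.mem_thickening_iff.1 hw
      exact ⟨_, ⟨x, hx, rfl⟩, Or.inl (mem_ball.2 hd)⟩
    · rintro ⟨_, ⟨x, hx, rfl⟩, hw | hw⟩
      · exact Metric.mem_thickening_iff.2 ⟨x, hx, mem_ball.1 hw⟩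
      · exact self_subset_thickening hδ T hw
  rw [he]
  refine isPreconnected_sUnion x₀ _ ?_ ?_
  · rintro s ⟨x, hx, rfl⟩; exact Or.inr hx₀
  · rintro s ⟨x, hx, rfl⟩
    exact IsPreconnected.union x (mem_ball_self hδ) hx
      (convex_ball x δ).isPreconnected hT

lemma exists_chunk {G : Set ℂ} (hG : IsOpen G) (hpc : IsPathConnected G) {z₀ z : ℂ}
    (hz₀ : z₀ ∈ G) (hz : z ∈ G) :
    ∃ W : Set ℂ, IsOpen W ∧ IsPreconnected W ∧ z₀ ∈ W ∧ z ∈ W ∧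
      IsBounded W ∧ closure W ⊆ G := by
  have J : JoinedIn G z₀ z := hpc.joinedIn z₀ hz₀ z hz
  set γ := J.somePath with hγ
  set T : Set ℂ := Set.range γ with hT
  have hTG : T ⊆ G := by rintro w ⟨t, rfl⟩; exact J.somePath_mem t
  have hTcomp : IsCompact T := isCompact_range γ.continuous
  have hTpre : IsPreconnected T := isPreconnected_range γ.continuous
  have hTne : T.Nonempty := ⟨z₀, 0, γ.source⟩
  obtain ⟨δ, hδpos, hδ⟩ := hTcomp.exists_cthickening_subset_open hG hTG
  refine ⟨thickening δ T, isOpen_thickening, isPreconnected_thickening' hTpre hTne hδpos,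
    self_subset_thickening hδpos T ⟨0, γ.source⟩,
    self_subset_thickening hδpos T ⟨1, γ.target⟩,
    hTcomp.isBounded.thickening, (closure_thickening_subset_cthickening δ T).trans hδ⟩

lemma exists_good_nbhd {G : Set ℂ} (hG : IsOpen G) (hGc : IsConnected G)
    {K : Set ℂ} (hK : IsCompact K) (hKG : K ⊆ G) {z₀ : ℂ} (hz₀ : z₀ ∈ G) :
    ∃ U : Set ℂ, IsOpen U ∧ IsPreconnected U ∧ z₀ ∈ U ∧ K ⊆ U ∧
      IsCompact (closure U) ∧ closure U ⊆ G := by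
  have hpc : IsPathConnected G := hG.isConnected_iff_isPathConnected.1 hGc
  have hK' : IsCompact (insert z₀ K) := hK.insert z₀
  have hK'G : insert z₀ K ⊆ G := insert_subset hz₀ hKG
  obtain ⟨δ, hδpos, hδ⟩ := hK'.exists_cthickening_subset_open hG hK'G
  obtain ⟨t, htsub, htfin, htcov⟩ := hK.elim_finite_subcover_image (b := K)
    (c := fun z => ball z δ) (fun i _ => isOpen_ball)
    (fun z hz => mem_biUnion hz (mem_ball_self hδpos))
  -- a connected bounded open set containing z₀ and all of t
  have hVex : ∀ s : Set ℂ, s.Finite → s ⊆ G → ∃ V : Set ℂ, IsOpen V ∧ IsPreconnected V ∧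
      z₀ ∈ V ∧ s ⊆ V ∧ IsBounded V ∧ closure V ⊆ G := by
    intro s hsfin
    refine Set.Finite.induction_on s hsfin ?_ ?_
    · intro _
      obtain ⟨W, h1, h2, h3, _, h5, h6⟩ := exists_chunk hG hpc hz₀ hz₀
      exact ⟨W, h1, h2, h3, empty_subset _, h5, h6⟩
    · rintro a s' ha hsfin' ih hsub
      obtain ⟨V, h1, h2, h3, h4, h5, h6⟩ := ih ((subset_insert a s').trans hsub)
      obtain ⟨W, g1, g2, g3, g4, g5, g6⟩ := exists_chunk hG hpc hz₀ (hsub (mem_insert a s'))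
      refine ⟨V ∪ W, h1.union g1, IsPreconnected.union z₀ h3 g3 h2 g2,
        Or.inl h3, insert_subset (Or.inr g4) (h4.trans subset_union_left),
        h5.union g5, ?_⟩
      rw [closure_union]
      exact union_subset h6 g6
  obtain ⟨V, hVopen, hVpre, hVz₀, hVt, hVbd, hVcl⟩ := hVex t htfin (htsub.trans hKG)
  refine ⟨V ∪ ⋃ z ∈ t, ball z δ, ?_, ?_, Or.inl hVz₀, ?_, ?_, ?_⟩
  · exact hVopen.union (isOpen_biUnion fun z _ => isOpen_ball)
  · have he : V ∪ ⋃ z ∈ t, ball z δ = ⋃₀ (insert V ((fun z => ball z δ ∪ V) '' t)) := by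
      ext w
      simp only [mem_sUnion, mem_insert_iff, mem_image, mem_union, mem_iUnion]
      constructor
      · rintro (hw | ⟨z, hz, hw⟩)
        · exact ⟨V, Or.inl rfl, hw⟩
        · exact ⟨ball z δ ∪ V, Or.inr ⟨z, hz, rfl⟩, Or.inl hw⟩
      · rintro ⟨S, (rfl | ⟨z, hz, rfl⟩), hw⟩
        · exact Or.inl hw
        · rcases hw with hw | hw
          · exact Or.inr ⟨z, hz, hw⟩
          · exact Or.inl hw
    rw [he]
    refine isPreconnected_sUnion z₀ _ ?_ ?_
    · rintro S (rfl | ⟨z, hz, rfl⟩)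
      · exact hVz₀
      · exact Or.inr hVz₀
    · rintro S (rfl | ⟨z, hz, rfl⟩)
      · exact hVpre
      · exact IsPreconnected.union z (mem_ball_self hδpos) (hVt hz)
          (convex_ball z δ).isPreconnected hVpre
  · exact htcov.trans subset_union_right
  · exact ((hVbd.union ((isBounded_biUnion htfin).2
      fun z _ => isBounded_ball)).isCompact_closure :)
  · rw [closure_union, htfin.closure_biUnion]
    refine union_subset hVcl (iUnion₂_subset fun z hz => ?_)
    refine (closure_ball_subset_closedBall).trans ?_
    exact (closedBall_subset_cthickening (mem_insert_iff.2 (Or.inr (htsub hz))) δ).trans hδ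

lemma case1 {G : Set ℂ} {v : ℂ → ℝ} (hv : ∀ z ∈ G, 0 ≤ v z)
    {U : Set ℂ} (hUopen : IsOpen U) (hUpre : IsPreconnected U) {z₀ : ℂ} (hz₀U : z₀ ∈ U)
    (hUG : U ⊆ G)
    (hfreqU : ∃ᶠ z in 𝓝[≠] z₀, z ∈ U ∧ 0 < v z)
    {n : ℕ} {r : ℝ} (hr : 0 < r)
    (hsym : ∀ h : ℂ → ℂ, MemHv G v h → (∀ z ∈ G, v z * ‖h z‖ ≤ r) →
      ∀ ε > 0, ∃ g : ℂ → ℂ, (MemHv G v g ∧ ∀ z ∈ U, ‖g z‖ ≤ (n : ℝ)) ∧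
        ∀ z ∈ G, v z * ‖h z - g z‖ ≤ ε)
    {h : ℂ → ℂ} (hh : MemHv G v h) (hhb : ∀ z ∈ G, v z * ‖h z‖ ≤ r) :
    ∀ z ∈ U, ‖h z‖ ≤ 2 * n := by
  classical
  set pick : (ℂ → ℂ) → (ℂ → ℂ) := fun w =>
    if hw : MemHv G v w ∧ ∀ z ∈ G, v z * ‖w z‖ ≤ r then
      Classical.choose (hsym w hw.1 hw.2 (r/2) (half_pos hr)) else 0 with hpick
  set rem : ℕ → ℂ → ℂ := fun j => Nat.rec h
    (fun j w => fun z => w z - (1/2:ℂ)^j * pick (fun y => (2:ℂ)^j * w y) z) j with hrem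
  set a : ℕ → ℂ → ℂ := fun j => pick (fun y => (2:ℂ)^j * rem j y) with ha
  have habs2 : ∀ j : ℕ, ‖(2:ℂ)^j‖ = (2:ℝ)^j := by
    intro j; rw [norm_pow]; norm_num
  have habs12 : ∀ j : ℕ, ‖(1/2:ℂ)^j‖ = (1/2:ℝ)^j := by
    intro j; rw [norm_pow, norm_div]; norm_num
  -- invariant
  have hinv : ∀ j, MemHv G v (rem j) ∧ ∀ z ∈ G, v z * ‖rem j z‖ ≤ (1/2:ℝ)^j * r := by
    intro j
    induction j with
    | zero => exact ⟨hh, by intro z hz; rw [pow_zero, one_mul]; exact hhb z hz⟩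
    | succ j ih =>
      have hyp : MemHv G v (fun y => (2:ℂ)^j * rem j y) ∧
          ∀ z ∈ G, v z * ‖(fun y => (2:ℂ)^j * rem j y) z‖ ≤ r := by
        refine ⟨memHv_const_mul ih.1 _, fun z hz => ?_⟩
        have : v z * ‖(2:ℂ)^j * rem j z‖
            = (2:ℝ)^j * (v z * ‖rem j z‖) := by
          rw [norm_mul, habs2]; ring
        rw [this]
        calc (2:ℝ)^j * (v z * ‖rem j z‖) ≤ (2:ℝ)^j * ((1/2:ℝ)^j * r) :=
              mul_le_mul_of_nonneg_left (ih.2 z hz) (by positivity)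
          _ = r := by rw [← mul_assoc, ← mul_pow]; norm_num
      have hspec := Classical.choose_spec (hsym _ hyp.1 hyp.2 (r/2) (half_pos hr))
      have haj : a j = Classical.choose (hsym _ hyp.1 hyp.2 (r/2) (half_pos hr)) := by
        rw [ha, hpick]; simp only [dif_pos hyp]
      rw [← haj] at hspec
      have hremS : ∀ z, rem (j+1) z = rem j z - (1/2:ℂ)^j * a j z := fun z => rfl
      have hkey : ∀ z, rem (j+1) z = (1/2:ℂ)^j * ((2:ℂ)^j * rem j z - a j z) := by
        intro z
        have h1 : (1/2:ℂ)^j * (2:ℂ)^j = 1 := by rw [← mul_pow]; norm_num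
        rw [hremS]
        calc rem j z - (1/2:ℂ)^j * a j z
            = ((1/2:ℂ)^j * (2:ℂ)^j) * rem j z - (1/2:ℂ)^j * a j z := by rw [h1, one_mul]
          _ = (1/2:ℂ)^j * ((2:ℂ)^j * rem j z - a j z) := by ring
      constructor
      · have : MemHv G v (fun z => rem j z - (1/2:ℂ)^j * a j z) :=
          memHv_sub hv ih.1 (memHv_const_mul hspec.1.1 _)
        have he : rem (j+1) = fun z => rem j z - (1/2:ℂ)^j * a j z := funext hremS
        rw [he]; exact this
      · intro z hz
        rw [hkey z, norm_mul, habs12]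
        have : v z * ((1/2:ℝ)^j * ‖(2:ℂ)^j * rem j z - a j z‖)
            = (1/2:ℝ)^j * (v z * ‖(2:ℂ)^j * rem j z - a j z‖) := by ring
        rw [this]
        calc (1/2:ℝ)^j * (v z * ‖(2:ℂ)^j * rem j z - a j z‖)
            ≤ (1/2:ℝ)^j * (r/2) := mul_le_mul_of_nonneg_left (hspec.2 z hz) (by positivity)
          _ = (1/2:ℝ)^(j+1) * r := by ring
  -- a j spec
  have hspec : ∀ j, (MemHv G v (a j) ∧ ∀ z ∈ U, ‖a j z‖ ≤ (n:ℝ)) ∧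
      ∀ z ∈ G, v z * ‖(2:ℂ)^j * rem j z - a j z‖ ≤ r/2 := by
    intro j
    have hyp : MemHv G v (fun y => (2:ℂ)^j * rem j y) ∧
        ∀ z ∈ G, v z * ‖(fun y => (2:ℂ)^j * rem j y) z‖ ≤ r := by
      refine ⟨memHv_const_mul (hinv j).1 _, fun z hz => ?_⟩
      have : v z * ‖(2:ℂ)^j * rem j z‖
          = (2:ℝ)^j * (v z * ‖rem j z‖) := by
        rw [norm_mul, habs2]; ring
      rw [this]
      calc (2:ℝ)^j * (v z * ‖rem j z‖) ≤ (2:ℝ)^j * ((1/2:ℝ)^j * r) :=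
            mul_le_mul_of_nonneg_left ((hinv j).2 z hz) (by positivity)
        _ = r := by rw [← mul_assoc, ← mul_pow]; norm_num
    have hs := Classical.choose_spec (hsym _ hyp.1 hyp.2 (r/2) (half_pos hr))
    have haj : a j = Classical.choose (hsym _ hyp.1 hyp.2 (r/2) (half_pos hr)) := by
      rw [ha, hpick]; simp only [dif_pos hyp]
    rw [← haj] at hs
    exact hs
  -- partial sums
  have hsum : ∀ N z, h z - (∑ j ∈ Finset.range N, (1/2:ℂ)^j * a j z) = rem N z := by
    intro N z
    induction N with
    | zero => simp [hrem]
    | succ N ih =>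
      rw [Finset.sum_range_succ]
      have : rem (N+1) z = rem N z - (1/2:ℂ)^N * a N z := rfl
      rw [this, ← ih]; ring
  -- uniform convergence on U
  have hu : Summable (fun j : ℕ => (1/2:ℝ)^j * n) :=
    (summable_geometric_of_lt_one (by norm_num) (by norm_num)).mul_right _
  have hbound : ∀ (j : ℕ) (x : ℂ), x ∈ U → ‖(1/2:ℂ)^j * a j x‖ ≤ (1/2:ℝ)^j * n := by
    intro j x hx
    rw [norm_mul, habs12]
    exact mul_le_mul_of_nonneg_left ((hspec j).1.2 x hx) (by positivity)
  set s : ℂ → ℂ := fun z => ∑' j : ℕ, (1/2:ℂ)^j * a j z with hs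
  have htuo : TendstoUniformlyOn (fun N x => ∑ j ∈ Finset.range N, (1/2:ℂ)^j * a j x) s atTop U :=
    tendstoUniformlyOn_tsum_nat hu hbound
  have hsd : DifferentiableOn ℂ s U := by
    refine htuo.tendstoLocallyUniformlyOn.differentiableOn (Eventually.of_forall fun N => ?_) hUopen
    exact DifferentiableOn.fun_sum fun j _ => (((hspec j).1.1.1.mono hUG).const_mul _ : _)
  -- h = s on U
  have heq : ∀ z ∈ U, h z = s z := by
    have claim0 : ∀ z ∈ U, 0 < v z → h z = s z := by
      intro z hzU hvz
      have t1 : Tendsto (fun N => ∑ j ∈ Finset.range N, (1/2:ℂ)^j * a j z) atTop (𝓝 (s z)) :=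
        htuo.tendsto_at hzU
      have t2 : Tendsto (fun N => ∑ j ∈ Finset.range N, (1/2:ℂ)^j * a j z) atTop (𝓝 (h z)) := by
        rw [tendsto_iff_dist_tendsto_zero]
        have hb : ∀ N : ℕ, dist (∑ j ∈ Finset.range N, (1/2:ℂ)^j * a j z) (h z)
            ≤ (1/2:ℝ)^N * (r / v z) := by
          intro N
          rw [Complex.dist_eq, ← norm_neg]
          have : -(∑ j ∈ Finset.range N, (1/2:ℂ)^j * a j z - h z)
              = h z - ∑ j ∈ Finset.range N, (1/2:ℂ)^j * a j z := by ring
          rw [this, hsum N z]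
          have h1 := (hinv N).2 z (hUG hzU)
          have hle : ‖rem N z‖ ≤ ((1/2:ℝ)^N * r) / v z := by
            rw [le_div_iff₀ hvz]
            calc ‖rem N z‖ * v z = v z * ‖rem N z‖ := by ring
              _ ≤ (1/2:ℝ)^N * r := h1
          calc ‖rem N z‖ ≤ ((1/2:ℝ)^N * r) / v z := hle
            _ = (1/2:ℝ)^N * (r / v z) := by ring
        refine squeeze_zero (fun N => dist_nonneg) hb ?_
        have : Tendsto (fun N : ℕ => (1/2:ℝ)^N) atTop (𝓝 0) :=
          tendsto_pow_atTop_nhds_zero_of_lt_one (by norm_num) (by norm_num)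
        simpa using this.mul_const (r / v z)
      exact tendsto_nhds_unique t2 t1
    have hdiff : DifferentiableOn ℂ (fun z => h z - s z) U := (hh.1.mono hUG).sub hsd
    have := hvIdentity hUopen hUpre hz₀U hfreqU hdiff
      (fun w hw hvw => sub_eq_zero.2 (claim0 w hw hvw))
    exact fun z hz => sub_eq_zero.1 (this z hz)
  -- final bound
  intro z hz
  rw [heq z hz]
  have hsn : Summable fun j : ℕ => ‖(1/2:ℂ)^j * a j z‖ :=
    Summable.of_nonneg_of_le (fun _ => norm_nonneg _) (fun j => hbound j z hz) hu
  calc ‖s z‖ = ‖∑' j : ℕ, (1/2:ℂ)^j * a j z‖ := rfl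
    _ ≤ ∑' j : ℕ, ‖(1/2:ℂ)^j * a j z‖ := norm_tsum_le_tsum_norm hsn
    _ ≤ ∑' j : ℕ, (1/2:ℝ)^j * n := Summable.tsum_le_tsum (fun j => hbound j z hz) hsn hu
    _ = (∑' j : ℕ, (1/2:ℝ)^j) * n := tsum_mul_right
    _ = 2 * n := by rw [tsum_geometric_of_lt_one (by norm_num) (by norm_num)]; norm_num

lemma memHv_add {G : Set ℂ} {v : ℂ → ℝ} (hv : ∀ z ∈ G, 0 ≤ v z) {f g : ℂ → ℂ}
    (hf : MemHv G v f) (hg : MemHv G v g) : MemHv G v (fun z => f z + g z) := by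
  obtain ⟨Cf, hCf⟩ := hf.2
  obtain ⟨Cg, hCg⟩ := hg.2
  refine ⟨hf.1.add hg.1, Cf + Cg, fun z hz => ?_⟩
  calc v z * ‖f z + g z‖ ≤ v z * (‖f z‖ + ‖g z‖) := by
        have : ‖f z + g z‖ ≤ ‖f z‖ + ‖g z‖ := by
          simpa using norm_add_le (f z) (g z)
        exact mul_le_mul_of_nonneg_left this (hv z hz)
    _ = v z * ‖f z‖ + v z * ‖g z‖ := by ring
    _ ≤ Cf + Cg := add_le_add (hCf z hz) (hCg z hz)

lemma forwardDir {G : Set ℂ} {v : ℂ → ℝ} (hG : IsOpen G) (hGc : IsConnected G)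
    (hv : ∀ z ∈ G, 0 ≤ v z)
    (hacc : ∃ z ∈ G, AccPt z (𝓟 {w ∈ G | 0 < v w}))
    (hcomp : HvComplete G v) :
    ∀ K ⊆ G, IsCompact K → ∃ C : ℝ, ∀ z ∈ K, ∀ f : ℂ → ℂ, MemHv G v f →
      ‖f z‖ ≤ C * HvNorm G v f := by
  classical
  obtain ⟨z₀, hz₀G, haccz⟩ := hacc
  have hne : G.Nonempty := hGc.nonempty
  have hfreq : ∃ᶠ z in 𝓝[≠] z₀, z ∈ G ∧ 0 < v z := by
    have h1 := accPt_iff_frequently.1 haccz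
    rw [show (𝓝[≠] z₀) = 𝓝[{z₀}ᶜ] z₀ from rfl, frequently_nhdsWithin_iff]
    exact h1.mono (fun y hy => ⟨⟨hy.2.1, hy.2.2⟩, Set.mem_compl_singleton_iff.mpr hy.1⟩)
  have hzero : ∀ f : ℂ → ℂ, MemHv G v f → HvNorm G v f = 0 → ∀ z ∈ G, f z = 0 := by
    intro f hf hf0
    refine hvIdentity hG hGc.isPreconnected hz₀G hfreq hf.1 (fun w hw hvw => ?_)
    have h1 := le_hvNorm hf hw
    rw [hf0] at h1
    have h2 : v w * ‖f w‖ = 0 :=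
      le_antisymm h1 (mul_nonneg (hv w hw) (norm_nonneg _))
    rcases mul_eq_zero.1 h2 with h | h
    · exact absurd h (ne_of_gt hvw)
    · exact norm_eq_zero.1 h
  intro K hKG hKcomp
  obtain ⟨U, hUopen, hUpre, hz₀U, hKU, hUclcomp, hUclG⟩ :=
    exists_good_nbhd hG hGc hKcomp hKG hz₀G
  have hUG : U ⊆ G := subset_closure.trans hUclG
  have hfreqU : ∃ᶠ z in 𝓝[≠] z₀, z ∈ U ∧ 0 < v z := by
    have hev : ∀ᶠ z in 𝓝[≠] z₀, z ∈ U :=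
      eventually_nhdsWithin_of_eventually_nhds (hUopen.mem_nhds hz₀U)
    exact (hfreq.and_eventually hev).mono fun z hz => ⟨hz.2, hz.1.2⟩
  by_cases hc : ∃ (n : ℕ) (r : ℝ) (f₀ : ℂ → ℂ), 0 < r ∧ MemHv G v f₀ ∧
      ∀ h : ℂ → ℂ, MemHv G v h → (∀ z ∈ G, v z * ‖h z - f₀ z‖ ≤ r) →
        ∀ ε > 0, ∃ g : ℂ → ℂ, (MemHv G v g ∧ ∀ z ∈ U, ‖g z‖ ≤ (n : ℝ)) ∧
          ∀ z ∈ G, v z * ‖h z - g z‖ ≤ ε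
  · obtain ⟨n, r, f₀, hr, hf₀, happx⟩ := hc
    have habs12 : ‖(1/2 : ℂ)‖ = 1/2 := by
      rw [norm_div]; norm_num
    have hsym : ∀ h : ℂ → ℂ, MemHv G v h → (∀ z ∈ G, v z * ‖h z‖ ≤ r) →
        ∀ ε > 0, ∃ g : ℂ → ℂ, (MemHv G v g ∧ ∀ z ∈ U, ‖g z‖ ≤ (n : ℝ)) ∧
          ∀ z ∈ G, v z * ‖h z - g z‖ ≤ ε := by
      intro h hh hhb ε hε
      have hp : MemHv G v (fun z => f₀ z + h z) := memHv_add hv hf₀ hh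
      have hm : MemHv G v (fun z => f₀ z - h z) := memHv_sub hv hf₀ hh
      obtain ⟨ga, ⟨hgam, hgab⟩, hga⟩ := happx (fun z => f₀ z + h z) hp
        (by intro z hz; rw [add_sub_cancel_left]; exact hhb z hz) ε hε
      obtain ⟨gb, ⟨hgbm, hgbb⟩, hgb⟩ := happx (fun z => f₀ z - h z) hm
        (by intro z hz; rw [sub_sub_cancel_left, norm_neg]; exact hhb z hz) ε hε
      refine ⟨fun z => (1/2 : ℂ) * (ga z - gb z),
        ⟨memHv_const_mul (memHv_sub hv hgam hgbm) _, ?_⟩, ?_⟩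
      · intro z hz
        rw [norm_mul, habs12]
        have h1 : ‖ga z - gb z‖ ≤ (n : ℝ) + (n : ℝ) := by
          have := norm_sub_le (ga z) (gb z)
          exact this.trans (add_le_add (hgab z hz) (hgbb z hz))
        calc (1/2 : ℝ) * ‖ga z - gb z‖ ≤ (1/2) * ((n:ℝ) + n) :=
              mul_le_mul_of_nonneg_left h1 (by norm_num)
          _ = (n : ℝ) := by ring
      · intro z hz
        have key : h z - (1/2 : ℂ) * (ga z - gb z)
            = (1/2 : ℂ) * (((f₀ z + h z) - ga z) - ((f₀ z - h z) - gb z)) := by ring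
        rw [key, norm_mul, habs12]
        have ht : ‖((f₀ z + h z) - ga z) - ((f₀ z - h z) - gb z)‖
            ≤ ‖(f₀ z + h z) - ga z‖ + ‖(f₀ z - h z) - gb z‖ := by
          have := norm_sub_le ((f₀ z + h z) - ga z) ((f₀ z - h z) - gb z)
          simpa using this
        have h1 := hga z hz
        have h2 := hgb z hz
        calc v z * ((1/2 : ℝ) * ‖((f₀ z + h z) - ga z) - ((f₀ z - h z) - gb z)‖)
            = (1/2) * (v z * ‖((f₀ z + h z) - ga z) - ((f₀ z - h z) - gb z)‖) := by
              ring
          _ ≤ (1/2) * (v z * ‖(f₀ z + h z) - ga z‖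
                + v z * ‖(f₀ z - h z) - gb z‖) := by
              have := mul_le_mul_of_nonneg_left ht (hv z hz)
              nlinarith [this]
          _ ≤ (1/2) * (ε + ε) := by
              have : v z * ‖(f₀ z + h z) - ga z‖
                  + v z * ‖(f₀ z - h z) - gb z‖ ≤ ε + ε := add_le_add h1 h2
              nlinarith [this]
          _ = ε := by ring
    refine ⟨2 * n / r, fun z hz f hf => ?_⟩
    have ht0 : 0 ≤ HvNorm G v f := hvNorm_nonneg hv hne hf
    rcases eq_or_lt_of_le ht0 with ht | ht
    · have hfz := hzero f hf ht.symm z (hKG hz)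
      rw [hfz, ← ht]
      simp
    · have hsc : MemHv G v (fun w => ((r / HvNorm G v f : ℝ) : ℂ) * f w) := memHv_const_mul hf _
      have hdivpos : 0 < r / HvNorm G v f := div_pos hr ht
      have hscb : ∀ w ∈ G, v w * ‖((r / HvNorm G v f : ℝ) : ℂ) * f w‖ ≤ r := by
        intro w hw
        rw [norm_mul, Complex.norm_real, Real.norm_of_nonneg hdivpos.le]
        have h1 : v w * ‖f w‖ ≤ HvNorm G v f := le_hvNorm hf hw
        calc v w * (r / HvNorm G v f * ‖f w‖)
            = (r / HvNorm G v f) * (v w * ‖f w‖) := by ring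
          _ ≤ (r / HvNorm G v f) * HvNorm G v f :=
              mul_le_mul_of_nonneg_left h1 hdivpos.le
          _ = r := by field_simp
      have h2 := case1 hv hUopen hUpre hz₀U hUG hfreqU hr hsym hsc hscb z (hKU hz)
      rw [norm_mul, Complex.norm_real, Real.norm_of_nonneg hdivpos.le] at h2
      have h3 := mul_le_mul_of_nonneg_right h2 (div_pos ht hr).le
      have h4 : (r / HvNorm G v f * ‖f z‖) * (HvNorm G v f / r)
          = ‖f z‖ := by
        field_simp
      have h5 : (2 * (n:ℝ)) * (HvNorm G v f / r) = 2 * n / r * HvNorm G v f := by ring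
      rw [h4, h5] at h3
      exact h3
  · exfalso
    push_neg at hc
    have key : ∀ (N : ℕ) (f₀ : ℂ → ℂ) (ρ : ℝ), ∃ p : (ℂ → ℂ) × ℝ,
        MemHv G v f₀ → 0 < ρ →
        MemHv G v p.1 ∧ 0 < p.2 ∧ p.2 ≤ ρ/4 ∧
        (∀ z ∈ G, v z * ‖p.1 z - f₀ z‖ ≤ ρ/2) ∧
        ∀ g : ℂ → ℂ, (MemHv G v g ∧ ∀ z ∈ U, ‖g z‖ ≤ (N : ℝ)) →
          ¬(∀ z ∈ G, v z * ‖p.1 z - g z‖ ≤ 2 * p.2) := by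
      intro N f₀ ρ
      by_cases hyp : MemHv G v f₀ ∧ 0 < ρ
      · obtain ⟨h, hh1, hh2, hh3⟩ := hc N (ρ/2) f₀ (by linarith [hyp.2]) hyp.1
        obtain ⟨ε, hε, hbad⟩ := hh3
        refine ⟨(h, min ε ρ / 4), fun _ _ => ⟨hh1, by positivity, ?_, hh2, ?_⟩⟩
        · have := min_le_right ε ρ
          simp only
          linarith
        · intro g hg hcon
          obtain ⟨z, hzG, hgt⟩ := hbad g hg
          have hcz := hcon z hzG
          have hmin : 2 * (min ε ρ / 4) ≤ ε / 2 := by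
            have := min_le_left ε ρ
            linarith
          simp only at hcz
          linarith
      · exact ⟨(f₀, 1), fun h1 h2 => absurd ⟨h1, h2⟩ hyp⟩
    set seq : ℕ → (ℂ → ℂ) × ℝ := fun N => Nat.rec ((fun _ => 0 : ℂ → ℂ), (1:ℝ))
        (fun N p => Classical.choose (key N p.1 p.2)) N with hseqdef
    have hseqS : ∀ N, seq (N+1) = Classical.choose (key N (seq N).1 (seq N).2) := fun N => rfl
    have hmem0 : MemHv G v (fun _ => (0:ℂ)) := ⟨differentiableOn_const 0, 0, by simp⟩
    have hinv : ∀ N, MemHv G v (seq N).1 ∧ 0 < (seq N).2 := by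
      intro N
      induction N with
      | zero => exact ⟨hmem0, one_pos⟩
      | succ N ih =>
        have hsp := Classical.choose_spec (key N (seq N).1 (seq N).2) ih.1 ih.2
        rw [hseqS N]
        exact ⟨hsp.1, hsp.2.1⟩
    have hstep : ∀ N, (seq (N+1)).2 ≤ (seq N).2/4 ∧
        (∀ z ∈ G, v z * ‖(seq (N+1)).1 z - (seq N).1 z‖ ≤ (seq N).2/2) ∧
        ∀ g : ℂ → ℂ, (MemHv G v g ∧ ∀ z ∈ U, ‖g z‖ ≤ (N : ℝ)) →
          ¬(∀ z ∈ G, v z * ‖(seq (N+1)).1 z - g z‖ ≤ 2 * (seq (N+1)).2) := by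
      intro N
      have hsp := Classical.choose_spec (key N (seq N).1 (seq N).2) (hinv N).1 (hinv N).2
      rw [hseqS N]
      exact ⟨hsp.2.2.1, hsp.2.2.2.1, hsp.2.2.2.2⟩
    have htri : ∀ z ∈ G, ∀ a b c : ℂ, v z * ‖a - c‖
        ≤ v z * ‖a - b‖ + v z * ‖b - c‖ := by
      intro z hz a b c
      have h : ‖a - c‖ ≤ ‖a - b‖ + ‖b - c‖ := by
        simpa [Complex.dist_eq] using dist_triangle a b c
      calc v z * ‖a - c‖ ≤ v z * (‖a - b‖ + ‖b - c‖) :=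
            mul_le_mul_of_nonneg_left h (hv z hz)
        _ = _ := by ring
    have hchain : ∀ N m, N < m → ∀ z ∈ G,
        v z * ‖(seq m).1 z - (seq N).1 z‖ ≤ (seq N).2 - 2*(seq m).2 := by
      intro N m hNm
      induction m with
      | zero => exact absurd hNm (Nat.not_lt_zero N)
      | succ m ih =>
        rcases Nat.lt_succ_iff_lt_or_eq.1 hNm with hlt | heq
        · intro z hz
          have h1 := ih hlt z hz
          have h2 := (hstep m).2.1 z hz
          have h3 := (hstep m).1
          have h4 := (hinv m).2
          calc v z * ‖(seq (m+1)).1 z - (seq N).1 z‖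
              ≤ v z * ‖(seq (m+1)).1 z - (seq m).1 z‖
                + v z * ‖(seq m).1 z - (seq N).1 z‖ := htri z hz _ _ _
            _ ≤ (seq m).2/2 + ((seq N).2 - 2*(seq m).2) := add_le_add h2 h1
            _ ≤ (seq N).2 - 2*(seq (m+1)).2 := by linarith
        · subst heq
          intro z hz
          have h2 := (hstep N).2.1 z hz
          have h3 := (hstep N).1
          linarith
    have hρ : ∀ N, (seq N).2 ≤ (1/2:ℝ)^N := by
      intro N
      induction N with
      | zero =>
        have : (seq 0).2 = 1 := rfl
        rw [this]; norm_num
      | succ N ih =>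
        have h1 := (hstep N).1
        have h2 : (0:ℝ) ≤ (1/2:ℝ)^N := by positivity
        rw [pow_succ]
        linarith
    have hchain' : ∀ N m, N ≤ m → ∀ z ∈ G,
        v z * ‖(seq m).1 z - (seq N).1 z‖ ≤ (seq N).2 := by
      intro N m h z hz
      rcases eq_or_lt_of_le h with rfl | hlt
      · simpa using (hinv N).2.le
      · exact le_trans (hchain N m hlt z hz) (by linarith [(hinv m).2])
    have hcauchy : HvCauchy G v (fun N => (seq N).1) := by
      intro ε hε
      obtain ⟨N₀, hN₀⟩ := exists_pow_lt_of_lt_one (show (0:ℝ) < ε/2 by linarith)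
        (show (1/2:ℝ) < 1 by norm_num)
      refine ⟨N₀, fun m hm m' hm' z hz => ?_⟩
      have h1 := hchain' N₀ m hm z hz
      have h2 := hchain' N₀ m' hm' z hz
      have h3 := htri z hz ((seq m).1 z) ((seq N₀).1 z) ((seq m').1 z)
      have h4 : v z * ‖(seq N₀).1 z - (seq m').1 z‖
          = v z * ‖(seq m').1 z - (seq N₀).1 z‖ := by
        rw [norm_sub_rev]
      rw [h4] at h3
      have h5 := hρ N₀
      linarith
    obtain ⟨flim, hflim, htv⟩ := hcomp _ (fun N => (hinv N).1) hcauchy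
    have hnear : ∀ N, ∀ z ∈ G,
        v z * ‖(seq (N+1)).1 z - flim z‖ ≤ 2 * (seq (N+1)).2 := by
      intro N z hz
      obtain ⟨M₀, hM₀⟩ := htv ((seq (N+1)).2) (hinv (N+1)).2
      have hm2 : N+1 < max M₀ (N+2) := lt_of_lt_of_le (Nat.lt_succ_self (N+1)) (le_max_right _ _)
      have h1 := hchain (N+1) (max M₀ (N+2)) hm2 z hz
      have h2 := hM₀ (max M₀ (N+2)) (le_max_left _ _) z hz
      have h3 := htri z hz ((seq (N+1)).1 z) ((seq (max M₀ (N+2))).1 z) (flim z)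
      have h4 : v z * ‖(seq (N+1)).1 z - (seq (max M₀ (N+2))).1 z‖
          = v z * ‖(seq (max M₀ (N+2))).1 z - (seq (N+1)).1 z‖ := by
        rw [norm_sub_rev]
      rw [h4] at h3
      have h5 := (hinv (max M₀ (N+2))).2
      linarith
    have hcont : ContinuousOn flim (closure U) := (hflim.1.continuousOn).mono hUclG
    obtain ⟨C0, hC0⟩ := hUclcomp.exists_bound_of_continuousOn hcont
    obtain ⟨M, hM⟩ := exists_nat_ge C0
    refine (hstep M).2.2 flim ⟨hflim, fun z hz => ?_⟩ (fun z hz => hnear M z hz)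
    have := hC0 z (subset_closure hz)
    linarith

theorem stmt3 (G : Set ℂ) (v : ℂ → ℝ) (hG : IsOpen G) (hGc : IsConnected G)
    (hv : ∀ z ∈ G, 0 ≤ v z)
    (hacc : ∃ z ∈ G, AccPt z (𝓟 {w ∈ G | 0 < v w})) :
    HvComplete G v ↔
      ((∀ z ∈ G, ∃ C : ℝ, ∀ f : ℂ → ℂ, MemHv G v f →
          ‖f z‖ ≤ C * HvNorm G v f) ∧
       (∀ K ⊆ G, IsCompact K → ∃ C : ℝ, ∀ z ∈ K, ∀ f : ℂ → ℂ, MemHv G v f →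
          ‖f z‖ ≤ C * HvNorm G v f)) := by
  constructor
  · intro hcomp
    have hsecond := forwardDir hG hGc hv hacc hcomp
    refine ⟨fun z hz => ?_, hsecond⟩
    obtain ⟨C, hC⟩ := hsecond {z} (singleton_subset_iff.2 hz) isCompact_singleton
    exact ⟨C, fun f hf => hC z rfl f hf⟩
  · intro hrhs
    exact backwardDir hG hGc hv hrhs.2
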